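/- Let D be an invertible diagonal n×n matrix with positive entries, L a matrix of full row rank k ≤ n with L = C D for C of full row rank, and let A ∈ ℝ^{n×n}, u : ℝ → ℝ^m, B ∈ ℝ^{n×m}. If x solves x' = A x + B u then, setting M = D A D⁻¹, the function z = D x solves z' = M z + D B u, and L x = C z. Consequently, if C is a lumping of M (i.e., C M = (C M C⁺) C) then y = L x solves y' = (L A L⁺) y + (L B) u. -/

import Mathlib

/-- Generalized right inverse `M⁺ = Mᵀ (M Mᵀ)⁻¹`. -/
noncomputable def pinv {k n : ℕ} (L : Matrix (Fin k) (Fin n) ℝ) :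
    Matrix (Fin n) (Fin k) ℝ :=
  L.transpose * (L * L.transpose)⁻¹

lemma mul_pinv_eq_one {k n : ℕ} (L : Matrix (Fin k) (Fin n) ℝ) (h : L.rank = k) :
    L * pinv L = 1 := by
  have h1 : (L * L.transpose).rank = k := by
    rw [Matrix.rank_self_mul_transpose, h]
  have hsurj : Function.Surjective (L * L.transpose).mulVec := by
    have : LinearMap.range (L * L.transpose).mulVecLin = ⊤ := by
      apply Submodule.eq_top_of_finrank_eq
      rw [← Matrix.rank]
      simp [h1]
    intro v
    obtain ⟨w, hw⟩ := LinearMap.range_eq_top.mp this v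
    exact ⟨w, hw⟩
  have hu : IsUnit (L * L.transpose) := Matrix.mulVec_surjective_iff_isUnit.mp hsurj
  have hdet : IsUnit (L * L.transpose).det := (Matrix.isUnit_iff_isUnit_det _).mp hu
  rw [pinv, ← Matrix.mul_assoc]
  exact Matrix.mul_nonsing_inv _ hdet

lemma hasDerivAt_mulVec {n p : ℕ} (M : Matrix (Fin p) (Fin n) ℝ)
    {x : ℝ → Fin n → ℝ} {x' : Fin n → ℝ} {t : ℝ} (hx : HasDerivAt x x' t) :
    HasDerivAt (fun s => M.mulVec (x s)) (M.mulVec x') t := by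
  have := (LinearMap.toContinuousLinearMap M.mulVecLin).hasFDerivAt.comp_hasDerivAt t hx
  simpa [Function.comp_def, Matrix.mulVecLin_apply] using this

theorem lumping_via_diagonal_conjugation {k n m : ℕ} (hkn : k ≤ n)
    (d : Fin n → ℝ) (hd : ∀ i, 0 < d i)
    (C : Matrix (Fin k) (Fin n) ℝ) (hCrank : C.rank = k)
    (L : Matrix (Fin k) (Fin n) ℝ) (hL : L = C * Matrix.diagonal d)
    (hLrank : L.rank = k)
    (A : Matrix (Fin n) (Fin n) ℝ) (B : Matrix (Fin n) (Fin m) ℝ)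
    (u : ℝ → Fin m → ℝ) (x : ℝ → Fin n → ℝ)
    (hx : ∀ t : ℝ, HasDerivAt x (A.mulVec (x t) + B.mulVec (u t)) t) :
    (∀ t : ℝ, HasDerivAt (fun s => (Matrix.diagonal d).mulVec (x s))
        ((Matrix.diagonal d * A * (Matrix.diagonal d)⁻¹).mulVec
            ((Matrix.diagonal d).mulVec (x t)) +
          (Matrix.diagonal d * B).mulVec (u t)) t) ∧
    (∀ t : ℝ, L.mulVec (x t) = C.mulVec ((Matrix.diagonal d).mulVec (x t))) ∧
    ((C * (Matrix.diagonal d * A * (Matrix.diagonal d)⁻¹) =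
        (C * (Matrix.diagonal d * A * (Matrix.diagonal d)⁻¹) * pinv C) * C) →
      ∀ t : ℝ, HasDerivAt (fun s => L.mulVec (x s))
        ((L * A * pinv L).mulVec (L.mulVec (x t)) + (L * B).mulVec (u t)) t) := by
  set D := Matrix.diagonal d with hD
  have hdetD : IsUnit D.det := by
    rw [hD, Matrix.det_diagonal]
    exact isUnit_iff_ne_zero.mpr (Finset.prod_ne_zero_iff.mpr fun i _ => (hd i).ne')
  have hDinv : D⁻¹ * D = 1 := Matrix.nonsing_inv_mul D hdetD
  refine ⟨?_, ?_, ?_⟩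
  · intro t
    have key : (D * A * D⁻¹).mulVec (D.mulVec (x t)) + (D * B).mulVec (u t)
        = D.mulVec (A.mulVec (x t) + B.mulVec (u t)) := by
      rw [Matrix.mulVec_add]
      simp only [Matrix.mulVec_mulVec]
      rw [Matrix.mul_assoc (D * A) D⁻¹ D, hDinv, Matrix.mul_one]
    rw [key]
    exact hasDerivAt_mulVec D (hx t)
  · intro t
    rw [hL, ← Matrix.mulVec_mulVec]
  · intro hlump t
    set M := D * A * D⁻¹ with hM
    have hLA : L * A = (C * M * pinv C) * L := by
      have h1 : L * A = C * M * D := by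
        rw [hL, hM, Matrix.mul_assoc C (D * A * D⁻¹) D, Matrix.mul_assoc (D * A) D⁻¹ D,
          hDinv, Matrix.mul_one, ← Matrix.mul_assoc C D A]
      rw [h1, hL, ← Matrix.mul_assoc (C * M * pinv C) C D, ← hlump]
    have hLpinv : L * pinv L = 1 := mul_pinv_eq_one L hLrank
    have hkey : L * A * pinv L * L = L * A := by
      rw [hLA, Matrix.mul_assoc (C * M * pinv C) L (pinv L), hLpinv, Matrix.mul_one]
    have key : (L * A * pinv L).mulVec (L.mulVec (x t)) + (L * B).mulVec (u t)
        = L.mulVec (A.mulVec (x t) + B.mulVec (u t)) := by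
      rw [Matrix.mulVec_add, Matrix.mulVec_mulVec, Matrix.mulVec_mulVec, hkey,
        Matrix.mulVec_mulVec]
    rw [key]
    exact hasDerivAt_mulVec L (hx t)
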